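/- If 0 < t₁ ≤ t₂ ≤ 4/3 and 0 < t₃ ≤ 4/3 with all V_i > 0 and H_i > 0, then E₁ := t₂²t₃² + H₁V₁ − L₁²/4 > 0. Consequently, E_i < 0 can hold only when t_i > max(t_j, t_k), and at most one of E₁, E₂, E₃ can be negative. -/

import Mathlib

/-- V_i = (t_j² + t_k² − 3t_i² + 2t_i t_j + 2t_i t_k − 2t_j t_k)/t_i -/
noncomputable def Vq (ti tj tk : ℝ) : ℝ :=
  (tj^2 + tk^2 - 3*ti^2 + 2*ti*tj + 2*ti*tk - 2*tj*tk) / ti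

/-- H_i = 4 − 3t_i -/
def Hq (ti : ℝ) : ℝ := 4 - 3*ti

/-- L_i = 6(t_j t_k − t_j − t_k + t_i) -/
def Lq (ti tj tk : ℝ) : ℝ := 6*(tj*tk - tj - tk + ti)

/-- E_i = t_j²t_k² + H_i V_i − L_i²/4 -/
noncomputable def Eq' (ti tj tk : ℝ) : ℝ :=
  tj^2*tk^2 + Hq ti * Vq ti tj tk - (Lq ti tj tk)^2 / 4

lemma keyA (a t : ℝ) (h1 : 0 < a) (h12 : a ≤ t) (h2 : t ≤ 4/3) :
    0 < a*t^2 + 4 - 3*a - 9*a*(t-1)^2 := by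
  nlinarith [mul_nonneg h1.le (sub_nonneg.2 h2), sq_nonneg (t-1),
    mul_nonneg h1.le (sq_nonneg (t-1))]

lemma keyR (a t : ℝ) (h1 : 0 < a) (h12 : a ≤ t) (h2 : t ≤ 4/3)
    (hB : 0 ≤ 6*a + 4 - 9*a*t) :
    0 < 64-144*t+144*t^2-32*t^3 + a*(-96+252*t-204*t^2+15*t^3)+a^2*(36-108*t+81*t^2) := by
  nlinarith [mul_nonneg hB h1.le, mul_nonneg hB (sub_nonneg.2 h12), mul_nonneg hB (sub_nonneg.2 h2),
    mul_nonneg hB hB, sq_nonneg (t-a), sq_nonneg (3*t-2), mul_pos h1 (h1.trans_le h12),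
    mul_nonneg (mul_nonneg hB h1.le) (sub_nonneg.2 h2),
    mul_nonneg (mul_nonneg h1.le h1.le) (sub_nonneg.2 h2)]

lemma keyP (t₁ t₂ t₃ : ℝ) (h1 : 0 < t₁) (h12 : t₁ ≤ t₂) (h2 : t₂ ≤ 4/3)
    (h3 : 0 < t₃) :
    0 < t₁*t₂^2*t₃^2 + (4-3*t₁)*(t₂^2 + t₃^2 - 3*t₁^2 + 2*t₁*t₂ + 2*t₁*t₃ - 2*t₂*t₃)
      - 9*t₁*(t₂*t₃ - t₂ - t₃ + t₁)^2 := by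
  set A : ℝ := t₁*t₂^2 + 4 - 3*t₁ - 9*t₁*(t₂-1)^2 with hAdef
  set B : ℝ := 2*(t₂-t₁)*(9*t₁*t₂-6*t₁-4) with hBdef
  set C : ℝ := 4*(t₂-t₁)*(t₂+3*t₁-3*t₁*t₂) with hCdef
  have hA : 0 < A := keyA t₁ t₂ h1 h12 h2
  have hP : t₁*t₂^2*t₃^2 + (4-3*t₁)*(t₂^2 + t₃^2 - 3*t₁^2 + 2*t₁*t₂ + 2*t₁*t₃ - 2*t₂*t₃)
      - 9*t₁*(t₂*t₃ - t₂ - t₃ + t₁)^2 = A*t₃^2 + B*t₃ + C := by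
    rw [hAdef, hBdef, hCdef]; ring
  rw [hP]
  have hC : 0 ≤ C := by
    rw [hCdef]
    have : 0 ≤ t₂+3*t₁-3*t₁*t₂ := by nlinarith [mul_nonneg h1.le (sub_nonneg.2 h2)]
    nlinarith [sub_nonneg.2 h12]
  rcases le_or_gt 0 (9*t₁*t₂-6*t₁-4) with hb | hb
  · have hBpos : 0 ≤ B := by
      rw [hBdef]; nlinarith [mul_nonneg (sub_nonneg.2 h12) hb]
    nlinarith [mul_pos hA (mul_pos h3 h3), mul_nonneg hBpos h3.le]
  · rcases eq_or_lt_of_le h12 with heq | hlt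
    · have : A*t₃^2 + B*t₃ + C = A*t₃^2 := by rw [hAdef, hBdef, hCdef, heq]; ring
      rw [this]; positivity
    · have hR := keyR t₁ t₂ h1 h12 h2 (by linarith)
      set R : ℝ := 64-144*t₂+144*t₂^2-32*t₂^3 + t₁*(-96+252*t₂-204*t₂^2+15*t₂^3)
        + t₁^2*(36-108*t₂+81*t₂^2) with hRdef
      have hid : 4*A*(A*t₃^2 + B*t₃ + C) = (2*A*t₃+B)^2 + 4*t₁*(t₂-t₁)*R := by
        rw [hAdef, hBdef, hCdef, hRdef]; ring
      have h5 : 0 < 4*A*(A*t₃^2 + B*t₃ + C) := by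
        rw [hid]
        have := mul_pos (mul_pos (by linarith : (0:ℝ) < 4*t₁) (sub_pos.2 hlt)) hR
        nlinarith [sq_nonneg (2*A*t₃+B)]
      nlinarith [h5, hA]

lemma E1pos (t₁ t₂ t₃ : ℝ) (h1 : 0 < t₁) (h12 : t₁ ≤ t₂) (h2 : t₂ ≤ 4/3)
    (h3 : 0 < t₃) : Eq' t₁ t₂ t₃ > 0 := by
  have hP := keyP t₁ t₂ t₃ h1 h12 h2 h3
  have hE : Eq' t₁ t₂ t₃ = (t₁*t₂^2*t₃^2 + (4-3*t₁)*(t₂^2 + t₃^2 - 3*t₁^2 + 2*t₁*t₂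
      + 2*t₁*t₃ - 2*t₂*t₃) - 9*t₁*(t₂*t₃ - t₂ - t₃ + t₁)^2) / t₁ := by
    unfold Eq' Vq Hq Lq
    field_simp
    ring
  rw [hE]
  exact div_pos hP h1

lemma Eq'_symm (ti tj tk : ℝ) : Eq' ti tj tk = Eq' ti tk tj := by
  unfold Eq' Vq Hq Lq; ring_nf

theorem stmt_10 :
    (∀ t₁ t₂ t₃ : ℝ, 0 < t₁ → t₁ ≤ t₂ → t₂ ≤ 4/3 → 0 < t₃ → t₃ ≤ 4/3 →
      Vq t₁ t₂ t₃ > 0 → Vq t₂ t₃ t₁ > 0 → Vq t₃ t₁ t₂ > 0 →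
      Hq t₁ > 0 → Hq t₂ > 0 → Hq t₃ > 0 →
      Eq' t₁ t₂ t₃ > 0) ∧
    (∀ t₁ t₂ t₃ : ℝ, 0 < t₁ → 0 < t₂ → 0 < t₃ →
      t₁ ≤ 4/3 → t₂ ≤ 4/3 → t₃ ≤ 4/3 →
      Vq t₁ t₂ t₃ > 0 → Vq t₂ t₃ t₁ > 0 → Vq t₃ t₁ t₂ > 0 →
      Hq t₁ > 0 → Hq t₂ > 0 → Hq t₃ > 0 →
      ((Eq' t₁ t₂ t₃ < 0 → t₁ > max t₂ t₃) ∧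
       (Eq' t₂ t₃ t₁ < 0 → t₂ > max t₃ t₁) ∧
       (Eq' t₃ t₁ t₂ < 0 → t₃ > max t₁ t₂) ∧
       ¬(Eq' t₁ t₂ t₃ < 0 ∧ Eq' t₂ t₃ t₁ < 0) ∧
       ¬(Eq' t₁ t₂ t₃ < 0 ∧ Eq' t₃ t₁ t₂ < 0) ∧
       ¬(Eq' t₂ t₃ t₁ < 0 ∧ Eq' t₃ t₁ t₂ < 0))) := by
  constructor
  · intro t₁ t₂ t₃ h1 h12 h2 h3 h3' _ _ _ _ _ _
    exact E1pos t₁ t₂ t₃ h1 h12 h2 h3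
  · intro t₁ t₂ t₃ h1 h2 h3 hb1 hb2 hb3 _ _ _ _ _ _
    have key : ∀ a b c : ℝ, 0 < a → 0 < b → 0 < c → b ≤ 4/3 → c ≤ 4/3 →
        Eq' a b c < 0 → a > max b c := by
      intro a b c ha hbp hcp hb hc hE
      have hab : b < a := by
        by_contra h
        push_neg at h
        exact absurd (E1pos a b c ha h hb hcp) (by linarith)
      have hac : c < a := by
        by_contra h
        push_neg at h
        have := E1pos a c b ha h hc hbp
        rw [Eq'_symm] at this
        exact absurd this (by linarith)
      exact max_lt hab hac
    refine ⟨fun h => key t₁ t₂ t₃ h1 h2 h3 hb2 hb3 h,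
            fun h => key t₂ t₃ t₁ h2 h3 h1 hb3 hb1 h,
            fun h => key t₃ t₁ t₂ h3 h1 h2 hb1 hb2 h, ?_, ?_, ?_⟩
    · rintro ⟨hA, hB⟩
      have h1' := key t₁ t₂ t₃ h1 h2 h3 hb2 hb3 hA
      have h2' := key t₂ t₃ t₁ h2 h3 h1 hb3 hb1 hB
      have := le_max_left t₂ t₃
      have := le_max_right t₃ t₁
      linarith
    · rintro ⟨hA, hB⟩
      have h1' := key t₁ t₂ t₃ h1 h2 h3 hb2 hb3 hA
      have h2' := key t₃ t₁ t₂ h3 h1 h2 hb1 hb2 hB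
      have := le_max_right t₂ t₃
      have := le_max_left t₁ t₂
      linarith
    · rintro ⟨hA, hB⟩
      have h1' := key t₂ t₃ t₁ h2 h3 h1 hb3 hb1 hA
      have h2' := key t₃ t₁ t₂ h3 h1 h2 hb1 hb2 hB
      have := le_max_left t₃ t₁
      have := le_max_right t₁ t₂
      linarith
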